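/- Let U_pos ⊆ ℝ^n be open, let A : U_pos → ℝ^{ℓ×n} and B : U_pos → ℝ^{n×m} be continuous, and assume A has constant rank on U_pos. For r ∈ U_pos and N := 3n + m, let D_r ⊆ ℝ^N × ℝ^N be the set of all pairs of flows (v_Lf, F_Lf, v_R, v_ext) and efforts (F_Le, v_Le, F_R, F_ext) with v_Lf = v_Le = v_R, A(r) v_Le = 0, v_ext = B(r)ᵀ v_Le, and ∃ μ ∈ ℝ^ℓ with F_Lf + F_Le + F_R + B(r) F_ext + A(r)ᵀ μ = 0. Then the family (D_r)_{r ∈ U_pos} is a modulated Dirac structure. -/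

import Mathlib

open Matrix

/-- A subset `D ⊆ V × V` is a Dirac structure with respect to the bilinear pairing `pair`
(between flows and efforts) if membership in `D` is equivalent to being "orthogonal" to all
of `D` with respect to `(f,e),(f̂,ê) ↦ pair f̂ e + pair f ê`. -/
def IsDiracPair {V : Type*} (pair : V → V → ℝ) (D : Set (V × V)) : Prop :=
  ∀ p : V × V, p ∈ D ↔ ∀ q ∈ D, pair q.1 p.2 + pair p.1 q.2 = 0

/-- A family `(D x)_{x ∈ U}` of subsets of `V × V` is a modulated Dirac structure if each
`D x` is a Dirac structure and around each `x ∈ U` there is a neighborhood `Ux ⊆ U` on which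
the family admits a continuous local trivialization by injective linear maps
`T y : W → V × V` (where `W ≅ ℝ^N`) with range `D y`. -/
def IsModulatedDirac (W : Type*) [AddCommGroup W] [Module ℝ W]
    {X V : Type*} [TopologicalSpace X] [TopologicalSpace V] [AddCommGroup V] [Module ℝ V]
    (pair : V → V → ℝ) (U : Set X) (D : X → Set (V × V)) : Prop :=
  (∀ x ∈ U, IsDiracPair pair (D x)) ∧
  ∀ x ∈ U, ∃ Ux : Set X, IsOpen Ux ∧ x ∈ Ux ∧ Ux ⊆ U ∧
    ∃ T : X → (W →ₗ[ℝ] V × V),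
      (∀ y ∈ Ux, Function.Injective (T y) ∧ Set.range (T y) = D y) ∧
      ∀ z : W, ContinuousOn (fun y => T y z) Ux

/-- `ℝ^{3n+m}` split as `ℝ^n × ℝ^n × ℝ^n × ℝ^m`, the shape of both the flow vector
`(v_Lf, F_Lf, v_R, v_ext)` and the effort vector `(F_Le, v_Le, F_R, F_ext)`. -/
abbrev Vnm (n m : ℕ) : Type :=
  (Fin n → ℝ) × (Fin n → ℝ) × (Fin n → ℝ) × (Fin m → ℝ)

/-- The componentwise Euclidean pairing on `ℝ^{3n+m} = ℝ^n × ℝ^n × ℝ^n × ℝ^m`. -/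
def pairVnm {n m : ℕ} (f e : Vnm n m) : ℝ :=
  f.1 ⬝ᵥ e.1 + f.2.1 ⬝ᵥ e.2.1 + f.2.2.1 ⬝ᵥ e.2.2.1 + f.2.2.2 ⬝ᵥ e.2.2.2

/-! ### Auxiliary lemmas -/

lemma exists_transpose_mulVec {ℓ n : ℕ} (A : Matrix (Fin ℓ) (Fin n) ℝ) (w : Fin n → ℝ)
    (h : ∀ v, A *ᵥ v = 0 → w ⬝ᵥ v = 0) : ∃ μ, Aᵀ *ᵥ μ = w := by
  let K : Submodule ℝ (EuclideanSpace ℝ (Fin n)) :=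
    (LinearMap.range (Matrix.mulVecLin Aᵀ)).map
      (WithLp.linearEquiv 2 ℝ (Fin n → ℝ)).symm.toLinearMap
  have hinner : ∀ x y : EuclideanSpace ℝ (Fin n),
      (inner ℝ x y : ℝ) = x.ofLp ⬝ᵥ y.ofLp := by
    intro x y
    simp [PiLp.inner_apply, RCLike.inner_apply, dotProduct, mul_comm]
  have hK : ∀ z : EuclideanSpace ℝ (Fin n), z ∈ Kᗮ → A *ᵥ z.ofLp = 0 := by
    intro z hz
    have h2 : ∀ μ : Fin ℓ → ℝ, μ ⬝ᵥ (A *ᵥ z.ofLp) = 0 := by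
      intro μ
      have := (Submodule.mem_orthogonal K z).mp hz (WithLp.toLp 2 (Aᵀ *ᵥ μ))
        ⟨Aᵀ *ᵥ μ, ⟨μ, rfl⟩, rfl⟩
      rw [hinner, WithLp.ofLp_toLp] at this
      rwa [mulVec_transpose, ← dotProduct_mulVec] at this
    have := h2 (A *ᵥ z.ofLp)
    rwa [dotProduct_self_eq_zero] at this
  have hw : WithLp.toLp 2 w ∈ Kᗮᗮ := by
    rw [Submodule.mem_orthogonal]
    intro u hu
    rw [hinner, dotProduct_comm]
    exact h u.ofLp (hK u hu)
  rw [Submodule.orthogonal_orthogonal] at hw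
  obtain ⟨v, ⟨μ, rfl⟩, hv⟩ := hw
  exact ⟨μ, by simpa [mulVec_transpose] using congrArg WithLp.ofLp hv⟩

lemma transpose_dot {a b : ℕ} (M : Matrix (Fin a) (Fin b) ℝ) (x : Fin a → ℝ) (y : Fin b → ℝ) :
    (Mᵀ *ᵥ x) ⬝ᵥ y = x ⬝ᵥ (M *ᵥ y) := by rw [mulVec_transpose, ← dotProduct_mulVec]

lemma dot_all_zero {n : ℕ} {u : Fin n → ℝ} (h : ∀ x, x ⬝ᵥ u = 0) : u = 0 := by
  have := h u
  rwa [dotProduct_comm, dotProduct_self_eq_zero] at this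

section rankAux
variable {n ρ ℓ k : ℕ}

lemma rank_eq_finrank_range' (M : Matrix (Fin ρ) (Fin n) ℝ) :
    M.rank = Module.finrank ℝ (LinearMap.range M.mulVecLin) := rfl

lemma surj_of_det {Q : Matrix (Fin ρ) (Fin n) ℝ} {R : Matrix (Fin n) (Fin ρ) ℝ}
    (h : (Q * R).det ≠ 0) : Function.Surjective Q.mulVecLin := by
  intro y
  refine ⟨R *ᵥ ((Q * R)⁻¹ *ᵥ y), ?_⟩
  show Q *ᵥ (R *ᵥ ((Q * R)⁻¹ *ᵥ y)) = y
  rw [mulVec_mulVec, mulVec_mulVec,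
    Matrix.mul_nonsing_inv _ (isUnit_iff_ne_zero.mpr h), one_mulVec]

lemma rank_of_surj {Q : Matrix (Fin ρ) (Fin n) ℝ} (h : Function.Surjective Q.mulVecLin) :
    Q.rank = ρ := by
  rw [rank_eq_finrank_range', LinearMap.range_eq_top.mpr h]
  simp

lemma finrank_ker_of_rank {M : Matrix (Fin ρ) (Fin n) ℝ} {r : ℕ} (h : M.rank = r) :
    Module.finrank ℝ (LinearMap.ker M.mulVecLin) = n - r := by
  have := LinearMap.finrank_range_add_finrank_ker M.mulVecLin
  rw [← rank_eq_finrank_range', h] at this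
  simp at this
  omega

lemma ker_LA_eq {A : Matrix (Fin ℓ) (Fin n) ℝ} {L : Matrix (Fin ρ) (Fin ℓ) ℝ}
    (hA : A.rank = ρ) (hs : Function.Surjective (L * A).mulVecLin) :
    LinearMap.ker (L * A).mulVecLin = LinearMap.ker A.mulVecLin := by
  symm
  apply Submodule.eq_of_le_of_finrank_eq
  · intro x hx
    have hx' : A *ᵥ x = 0 := hx
    show (L * A) *ᵥ x = 0
    rw [← mulVec_mulVec, hx', mulVec_zero]
  · rw [finrank_ker_of_rank hA, finrank_ker_of_rank (rank_of_surj hs)]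

lemma range_LA_transpose_eq {A : Matrix (Fin ℓ) (Fin n) ℝ} {L : Matrix (Fin ρ) (Fin ℓ) ℝ}
    (hA : A.rank = ρ) (hs : Function.Surjective (L * A).mulVecLin) :
    LinearMap.range (L * A)ᵀ.mulVecLin = LinearMap.range Aᵀ.mulVecLin := by
  apply Submodule.eq_of_le_of_finrank_eq
  · rintro x ⟨t, rfl⟩
    refine ⟨Lᵀ *ᵥ t, ?_⟩
    show Aᵀ *ᵥ (Lᵀ *ᵥ t) = (L * A)ᵀ *ᵥ t
    rw [mulVec_mulVec, ← transpose_mul]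
  · rw [← rank_eq_finrank_range', ← rank_eq_finrank_range', rank_transpose, rank_transpose,
      hA, rank_of_surj hs]

lemma mulVec_inj_of_gram {K : Matrix (Fin n) (Fin k) ℝ} (h : (Kᵀ * K).det ≠ 0) :
    ∀ x, K *ᵥ x = 0 → x = 0 := by
  intro x hx
  by_contra hne
  apply h
  rw [← Matrix.exists_mulVec_eq_zero_iff]
  exact ⟨x, hne, by rw [← mulVec_mulVec, hx, mulVec_zero]⟩

lemma transpose_mulVec_inj {Q : Matrix (Fin ρ) (Fin n) ℝ}
    (hs : Function.Surjective Q.mulVecLin) : ∀ t, Qᵀ *ᵥ t = 0 → t = 0 := by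
  intro t ht
  obtain ⟨x, hx⟩ := hs t
  have hx' : Q *ᵥ x = t := hx
  have : x ⬝ᵥ (Qᵀ *ᵥ t) = 0 := by rw [ht, dotProduct_zero]
  rw [dotProduct_mulVec, vecMul_transpose, hx', dotProduct_self_eq_zero] at this
  exact this.symm ▸ rfl

lemma range_K_eq {A : Matrix (Fin ℓ) (Fin n) ℝ} {K : Matrix (Fin n) (Fin k) ℝ}
    (hA : A.rank = ρ) (hk : k = n - ρ)
    (hKA : ∀ x, A *ᵥ (K *ᵥ x) = 0)
    (hinj : ∀ x, K *ᵥ x = 0 → x = 0) :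
    LinearMap.range K.mulVecLin = LinearMap.ker A.mulVecLin := by
  apply Submodule.eq_of_le_of_finrank_eq
  · rintro x ⟨t, rfl⟩
    exact hKA t
  · have h1 := LinearMap.finrank_range_add_finrank_ker K.mulVecLin
    have h2 : LinearMap.ker K.mulVecLin = ⊥ := by
      rw [LinearMap.ker_eq_bot']
      intro x hx
      exact hinj x hx
    rw [h2] at h1
    simp at h1
    rw [h1, finrank_ker_of_rank hA, hk]

lemma gram_det_ne_zero (C : Matrix (Fin n) (Fin k) ℝ)
    (h : ∀ x, C *ᵥ x = 0 → x = 0) : (Cᵀ * C).det ≠ 0 := by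
  intro h0
  obtain ⟨x, hx0, hx⟩ := Matrix.exists_mulVec_eq_zero_iff.mpr h0
  have h1 : (C *ᵥ x) ⬝ᵥ (C *ᵥ x) = 0 := by
    rw [dotProduct_mulVec, ← mulVec_transpose, mulVec_mulVec, hx, zero_dotProduct]
  exact hx0 (h x (dotProduct_self_eq_zero.mp h1))
end rankAux

lemma exists_LRC {ℓ n ρ : ℕ} (A : Matrix (Fin ℓ) (Fin n) ℝ) (hA : A.rank = ρ) :
    ∃ (L : Matrix (Fin ρ) (Fin ℓ) ℝ) (R : Matrix (Fin n) (Fin ρ) ℝ)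
      (C : Matrix (Fin n) (Fin (n - ρ)) ℝ),
      L * A * R = 1 ∧ A * C = 0 ∧ (∀ x, C *ᵥ x = 0 → x = 0) := by
  classical
  set φ := A.mulVecLin with hφ
  have hrange : Module.finrank ℝ (LinearMap.range φ) = ρ := hA
  have hker : Module.finrank ℝ (LinearMap.ker φ) = n - ρ := by
    have := LinearMap.finrank_range_add_finrank_ker φ
    rw [hrange, Module.finrank_pi] at this
    simp at this
    omega
  let b : Module.Basis (Fin ρ) ℝ (LinearMap.range φ) := Module.finBasisOfFinrankEq ℝ _ hrange
  let c : Module.Basis (Fin (n - ρ)) ℝ (LinearMap.ker φ) := Module.finBasisOfFinrankEq ℝ _ hker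
  have hw : ∀ i, ∃ x, φ x = (b i : Fin ℓ → ℝ) := fun i => (b i).2
  choose w hwspec using hw
  let Rlin : (Fin ρ → ℝ) →ₗ[ℝ] (Fin n → ℝ) := (Pi.basisFun ℝ (Fin ρ)).constr ℝ w
  let ψ : (Fin ρ → ℝ) →ₗ[ℝ] (Fin ℓ → ℝ) := φ ∘ₗ Rlin
  have hRlin : ∀ x : Fin ρ → ℝ, Rlin x = ∑ i, x i • w i := by
    intro x
    simp [Rlin, Module.Basis.constr_apply_fintype, Pi.basisFun_equivFun]
  have hψ : ∀ x : Fin ρ → ℝ, ψ x = ∑ i, x i • (b i : Fin ℓ → ℝ) := by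
    intro x
    simp only [ψ, LinearMap.comp_apply, hRlin, map_sum, LinearMap.map_smul, hwspec]
  have hψinj : LinearMap.ker ψ = ⊥ := by
    rw [LinearMap.ker_eq_bot']
    intro x hx
    have hsum : ∑ i, x i • (b i) = (0 : LinearMap.range φ) := by
      apply Subtype.ext
      push_cast
      rw [← hψ x, hx]
    have h0 := Fintype.linearIndependent_iff.mp b.linearIndependent x hsum
    ext i; exact h0 i
  obtain ⟨Llin, hL⟩ := LinearMap.exists_leftInverse_of_injective ψ hψinj
  let Clin : (Fin (n - ρ) → ℝ) →ₗ[ℝ] (Fin n → ℝ) :=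
    (LinearMap.ker φ).subtype ∘ₗ ((Pi.basisFun ℝ (Fin (n - ρ))).constr ℝ (fun i => c i))
  have hClin : ∀ x : Fin (n - ρ) → ℝ, Clin x = ∑ i, x i • (c i : Fin n → ℝ) := by
    intro x
    simp [Clin, Module.Basis.constr_apply_fintype, Pi.basisFun_equivFun]
  refine ⟨LinearMap.toMatrix' Llin, LinearMap.toMatrix' Rlin, LinearMap.toMatrix' Clin, ?_, ?_, ?_⟩
  · apply Matrix.toLin'.injective
    rw [Matrix.toLin'_mul, Matrix.toLin'_mul, Matrix.toLin'_one, Matrix.toLin'_toMatrix',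
      Matrix.toLin'_toMatrix']
    have hAφ : Matrix.toLin' A = φ := Matrix.toLin'_apply' A
    rw [hAφ, LinearMap.comp_assoc]
    exact hL
  · apply Matrix.toLin'.injective
    rw [Matrix.toLin'_mul, Matrix.toLin'_toMatrix', Matrix.toLin'_apply' A, map_zero]
    apply LinearMap.ext
    intro x
    simp only [LinearMap.comp_apply, LinearMap.zero_apply, Clin]
    exact LinearMap.map_coe_ker φ _
  · intro x hx
    have hCx : Clin x = 0 := by
      rw [← Matrix.toLin'_toMatrix' Clin, Matrix.toLin'_apply, hx]
    have hsum : ∑ i, x i • (c i) = (0 : LinearMap.ker φ) := by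
      apply Subtype.ext
      push_cast
      rw [← hClin x, hCx]
    have h0 := Fintype.linearIndependent_iff.mp c.linearIndependent x hsum
    ext i; exact h0 i

/-! ### The Dirac set and its Dirac property -/

def Dset {n m ℓ : ℕ} (A : Matrix (Fin ℓ) (Fin n) ℝ) (B : Matrix (Fin n) (Fin m) ℝ) :
    Set (Vnm n m × Vnm n m) :=
  {p : Vnm n m × Vnm n m |
    p.1.1 = p.2.2.1 ∧ p.1.2.2.1 = p.2.2.1 ∧
    A *ᵥ p.2.2.1 = 0 ∧
    p.1.2.2.2 = Bᵀ *ᵥ p.2.2.1 ∧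
    ∃ μ : Fin ℓ → ℝ,
      p.1.2.1 + p.2.1 + p.2.2.2.1 + B *ᵥ p.2.2.2.2 + Aᵀ *ᵥ μ = 0}

lemma isDiracPair_Dset {n m ℓ : ℕ} (A : Matrix (Fin ℓ) (Fin n) ℝ)
    (B : Matrix (Fin n) (Fin m) ℝ) : IsDiracPair pairVnm (Dset A B) := by
  rintro ⟨⟨a, b, c, d⟩, e1, e2, e3, e4⟩
  constructor
  · rintro ⟨ha, hc, hAe, hd, μ, hμ⟩ ⟨⟨a', b', c', d'⟩, f1, f2, f3, f4⟩
      ⟨ha', hc', hAf, hd', ν, hν⟩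
    simp only at ha hc hAe hd hμ ha' hc' hAf hd' hν ⊢
    have k1 : f2 ⬝ᵥ b + f2 ⬝ᵥ e1 + f2 ⬝ᵥ e3 + f2 ⬝ᵥ (B *ᵥ e4) = 0 := by
      have h0 := congrArg (fun u => f2 ⬝ᵥ u) hμ
      simp only [dotProduct_add, dotProduct_zero] at h0
      have h3 : f2 ⬝ᵥ (Aᵀ *ᵥ μ) = 0 := by
        rw [dotProduct_comm, transpose_dot, hAf, dotProduct_zero]
      linarith
    have k2 : e2 ⬝ᵥ b' + e2 ⬝ᵥ f1 + e2 ⬝ᵥ f3 + e2 ⬝ᵥ (B *ᵥ f4) = 0 := by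
      have h0 := congrArg (fun u => e2 ⬝ᵥ u) hν
      simp only [dotProduct_add, dotProduct_zero] at h0
      have h3 : e2 ⬝ᵥ (Aᵀ *ᵥ ν) = 0 := by
        rw [dotProduct_comm, transpose_dot, hAe, dotProduct_zero]
      linarith
    simp only [pairVnm]
    rw [ha, hc, hd, ha', hc', hd']
    rw [transpose_dot, transpose_dot, dotProduct_comm b' e2, dotProduct_comm b f2]
    linarith
  · intro h
    have hA1 : e2 = c := by
      have key : ∀ x : Fin n → ℝ, x ⬝ᵥ (e2 - c) = 0 := by
        intro x
        have := h ((0, x, 0, 0), (0, 0, -x, 0))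
          ⟨rfl, rfl, by simp [mulVec_zero], by simp, 0, by simp⟩
        simp only [pairVnm] at this
        simp only [zero_dotProduct, dotProduct_zero, dotProduct_neg, zero_add, add_zero] at this
        rw [dotProduct_sub]
        rw [dotProduct_comm c x] at this
        linarith
      have := dot_all_zero (u := e2 - c) key
      rwa [sub_eq_zero] at this
    have hA2 : a = c := by
      have key : ∀ x : Fin n → ℝ, x ⬝ᵥ (a - c) = 0 := by
        intro x
        have := h ((0, 0, 0, 0), (x, 0, -x, 0))
          ⟨rfl, rfl, by simp, by simp, 0, by simp⟩
        simp only [pairVnm, zero_dotProduct, dotProduct_zero, dotProduct_neg, zero_add,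
          add_zero] at this
        rw [dotProduct_sub, dotProduct_comm x a, dotProduct_comm x c]
        linarith
      have := dot_all_zero (u := a - c) key
      rwa [sub_eq_zero] at this
    have hA3 : d = Bᵀ *ᵥ c := by
      have key : ∀ y : Fin m → ℝ, y ⬝ᵥ (d - Bᵀ *ᵥ c) = 0 := by
        intro y
        have := h ((0, 0, 0, 0), (0, 0, -(B *ᵥ y), y))
          ⟨rfl, rfl, by simp, by simp, 0, by simp⟩
        simp only [pairVnm, zero_dotProduct, dotProduct_zero, dotProduct_neg, zero_add,
          add_zero] at this
        rw [dotProduct_sub, dotProduct_comm y d]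
        have h2 : c ⬝ᵥ (B *ᵥ y) = y ⬝ᵥ (Bᵀ *ᵥ c) := by
          rw [dotProduct_comm y (Bᵀ *ᵥ c), transpose_dot]
        linarith
      have := dot_all_zero (u := d - Bᵀ *ᵥ c) key
      rwa [sub_eq_zero] at this
    have hA4 : A *ᵥ c = 0 := by
      have key : ∀ ν : Fin ℓ → ℝ, ν ⬝ᵥ (A *ᵥ c) = 0 := by
        intro ν
        have := h ((0, 0, 0, 0), (0, 0, -(Aᵀ *ᵥ ν), 0))
          ⟨rfl, rfl, by simp, by simp, ν, by simp⟩
        simp only [pairVnm, zero_dotProduct, dotProduct_zero, dotProduct_neg, zero_add,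
          add_zero] at this
        have h2 : c ⬝ᵥ (Aᵀ *ᵥ ν) = ν ⬝ᵥ (A *ᵥ c) := by
          rw [dotProduct_comm c (Aᵀ *ᵥ ν), transpose_dot]
        linarith
      have := dot_all_zero (u := A *ᵥ c) fun x => key x
      exact this
    have hA5 : ∃ μ : Fin ℓ → ℝ, b + e1 + e3 + B *ᵥ e4 + Aᵀ *ᵥ μ = 0 := by
      have key : ∀ v : Fin n → ℝ, A *ᵥ v = 0 → (b + e1 + e3 + B *ᵥ e4) ⬝ᵥ v = 0 := by
        intro v hv
        have := h ((v, 0, v, Bᵀ *ᵥ v), (0, v, 0, 0))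
          ⟨rfl, rfl, hv, rfl, 0, by simp⟩
        simp only [pairVnm, zero_dotProduct, dotProduct_zero, zero_add, add_zero] at this
        rw [add_dotProduct, add_dotProduct, add_dotProduct]
        rw [dotProduct_comm b v, dotProduct_comm e1 v, dotProduct_comm e3 v]
        have h2 : (B *ᵥ e4) ⬝ᵥ v = (Bᵀ *ᵥ v) ⬝ᵥ e4 := by
          rw [transpose_dot, dotProduct_comm]
        rw [dotProduct_comm b v] at this
        linarith
      obtain ⟨μ, hμ⟩ := exists_transpose_mulVec A (b + e1 + e3 + B *ᵥ e4) (by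
        intro v hv
        exact key v hv)
      refine ⟨-μ, ?_⟩
      rw [Matrix.mulVec_neg, hμ]
      abel
    refine ⟨hA2.trans hA1.symm, hA1.symm, ?_, ?_, hA5⟩
    · show A *ᵥ e2 = 0
      rw [hA1]; exact hA4
    · show d = Bᵀ *ᵥ e2
      rw [hA1]; exact hA3

/-! ### Continuity helpers -/

section cont
variable {X : Type*} [TopologicalSpace X] {s : Set X} {a b c : ℕ}

lemma continuousOn_matrix_iff {f : X → Matrix (Fin a) (Fin b) ℝ} :
    ContinuousOn f s ↔ ∀ i j, ContinuousOn (fun x => f x i j) s := by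
  constructor
  · intro h i j
    exact (continuousOn_pi.mp (continuousOn_pi.mp h i) j)
  · intro h
    exact continuousOn_pi.mpr fun i => continuousOn_pi.mpr fun j => h i j

lemma ContinuousOn.matrix_mul' {f : X → Matrix (Fin a) (Fin b) ℝ}
    {g : X → Matrix (Fin b) (Fin c) ℝ} (hf : ContinuousOn f s) (hg : ContinuousOn g s) :
    ContinuousOn (fun x => f x * g x) s := by
  rw [continuousOn_matrix_iff]
  intro i j
  simp only [Matrix.mul_apply]
  exact continuousOn_finset_sum _ fun k _ =>
    ((continuousOn_matrix_iff.mp hf i k).mul (continuousOn_matrix_iff.mp hg k j))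

lemma ContinuousOn.matrix_transpose' {f : X → Matrix (Fin a) (Fin b) ℝ}
    (hf : ContinuousOn f s) : ContinuousOn (fun x => (f x)ᵀ) s := by
  rw [continuousOn_matrix_iff]
  intro i j
  exact continuousOn_matrix_iff.mp hf j i

lemma ContinuousOn.matrix_sub' {f g : X → Matrix (Fin a) (Fin b) ℝ}
    (hf : ContinuousOn f s) (hg : ContinuousOn g s) :
    ContinuousOn (fun x => f x - g x) s := by
  rw [continuousOn_matrix_iff]
  intro i j
  exact (continuousOn_matrix_iff.mp hf i j).sub (continuousOn_matrix_iff.mp hg i j)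

lemma ContinuousOn.matrix_det' {f : X → Matrix (Fin a) (Fin a) ℝ}
    (hf : ContinuousOn f s) : ContinuousOn (fun x => (f x).det) s :=
  (Continuous.matrix_det continuous_id).comp_continuousOn hf

lemma ContinuousOn.matrix_inv' {f : X → Matrix (Fin a) (Fin a) ℝ}
    (hf : ContinuousOn f s) (hdet : ∀ x ∈ s, (f x).det ≠ 0) :
    ContinuousOn (fun x => (f x)⁻¹) s := by
  have heq : ∀ x, (f x)⁻¹ = (f x).det⁻¹ • (f x).adjugate := by
    intro x
    rw [Matrix.inv_def, Ring.inverse_eq_inv']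
  simp only [heq]
  refine ContinuousOn.smul (f := fun x => (f x).det⁻¹) (g := fun x => (f x).adjugate) ?_ ?_
  · exact (hf.matrix_det').inv₀ hdet
  · exact (Continuous.matrix_adjugate continuous_id).comp_continuousOn hf

lemma ContinuousOn.matrix_mulVec' {f : X → Matrix (Fin a) (Fin b) ℝ} {v : X → Fin b → ℝ}
    (hf : ContinuousOn f s) (hv : ContinuousOn v s) :
    ContinuousOn (fun x => f x *ᵥ v x) s := by
  apply continuousOn_pi.mpr
  intro i
  simp only [Matrix.mulVec, dotProduct]
  exact continuousOn_finset_sum _ fun k _ =>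
    (continuousOn_matrix_iff.mp hf i k).mul (continuousOn_pi.mp hv k)
end cont

/-! ### The parametrization -/

abbrev Pspace (n m k ρ : ℕ) : Type :=
  (Fin k → ℝ) × (Fin n → ℝ) × (Fin n → ℝ) × (Fin m → ℝ) × (Fin ρ → ℝ)

def Smap {n m k ρ : ℕ} (K : Matrix (Fin n) (Fin k) ℝ) (Qt : Matrix (Fin n) (Fin ρ) ℝ)
    (B : Matrix (Fin n) (Fin m) ℝ) : Pspace n m k ρ →ₗ[ℝ] Vnm n m × Vnm n m where
  toFun z := ((K *ᵥ z.1, z.2.1, K *ᵥ z.1, Bᵀ *ᵥ (K *ᵥ z.1)),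
              (z.2.2.1, K *ᵥ z.1,
               Qt *ᵥ z.2.2.2.2 - z.2.1 - z.2.2.1 - B *ᵥ z.2.2.2.1, z.2.2.2.1))
  map_add' x y := by
    simp only [Prod.fst_add, Prod.snd_add, mulVec_add, Prod.mk_add_mk, Prod.mk.injEq,
      and_true, true_and]
    abel
  map_smul' r x := by
    simp only [Prod.smul_fst, Prod.smul_snd, mulVec_smul, Prod.smul_mk, Prod.mk.injEq,
      RingHom.id_apply, and_true, true_and]
    module

lemma Smap_apply {n m k ρ : ℕ} (K : Matrix (Fin n) (Fin k) ℝ) (Qt : Matrix (Fin n) (Fin ρ) ℝ)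
    (B : Matrix (Fin n) (Fin m) ℝ) (z : Pspace n m k ρ) :
    Smap K Qt B z = ((K *ᵥ z.1, z.2.1, K *ᵥ z.1, Bᵀ *ᵥ (K *ᵥ z.1)),
              (z.2.2.1, K *ᵥ z.1,
               Qt *ᵥ z.2.2.2.2 - z.2.1 - z.2.2.1 - B *ᵥ z.2.2.2.1, z.2.2.2.1)) := rfl

lemma smap_inj {n m k ρ : ℕ} {K : Matrix (Fin n) (Fin k) ℝ} {Qt : Matrix (Fin n) (Fin ρ) ℝ}
    (B : Matrix (Fin n) (Fin m) ℝ)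
    (hK : ∀ x, K *ᵥ x = 0 → x = 0) (hQ : ∀ t, Qt *ᵥ t = 0 → t = 0) :
    Function.Injective (Smap K Qt B) := by
  rw [← LinearMap.ker_eq_bot, LinearMap.ker_eq_bot']
  rintro ⟨w, b, α, δ, t⟩ hz
  rw [Smap_apply] at hz
  simp only [Prod.mk_eq_zero] at hz
  obtain ⟨⟨h1, h2, h3, h4⟩, h5, h6, h7, h8⟩ := hz
  have hw : w = 0 := hK w h1
  have ht : t = 0 := by
    apply hQ
    rw [h2, h5, h8] at h7
    simpa using h7
  simp only [Prod.mk_eq_zero]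
  exact ⟨hw, h2, h5, h8, ht⟩

lemma smap_range {n m k ρ ℓ : ℕ} {K : Matrix (Fin n) (Fin k) ℝ} {Qt : Matrix (Fin n) (Fin ρ) ℝ}
    {B : Matrix (Fin n) (Fin m) ℝ} {A : Matrix (Fin ℓ) (Fin n) ℝ}
    (hker : ∀ x, A *ᵥ (K *ᵥ x) = 0)
    (hsurjK : ∀ v, A *ᵥ v = 0 → ∃ w, K *ᵥ w = v)
    (hQA : ∀ t, ∃ μ, Aᵀ *ᵥ μ = Qt *ᵥ t)
    (hAQ : ∀ μ, ∃ t, Qt *ᵥ t = Aᵀ *ᵥ μ) :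
    Set.range (Smap K Qt B) = Dset A B := by
  ext p
  constructor
  · rintro ⟨⟨w, b, α, δ, t⟩, rfl⟩
    obtain ⟨μ, hμ⟩ := hQA t
    rw [Smap_apply]
    refine ⟨rfl, rfl, hker w, rfl, -μ, ?_⟩
    show b + α + (Qt *ᵥ t - b - α - B *ᵥ δ) + B *ᵥ δ + Aᵀ *ᵥ (-μ) = 0
    rw [Matrix.mulVec_neg, hμ]
    abel
  · obtain ⟨⟨pa, pb, pc, pd⟩, pe, pf, pg, ph⟩ := p
    rintro ⟨h1, h2, h3, h4, μ, hμ⟩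
    have h1' : pf = pa := Eq.symm h1
    have h2' : pf = pc := Eq.symm h2
    have h3' : A *ᵥ pf = 0 := h3
    have h4' : Bᵀ *ᵥ pf = pd := Eq.symm h4
    have hμ' : pb + pe + pg + B *ᵥ ph + Aᵀ *ᵥ μ = 0 := hμ
    subst h1' h2' h4'
    obtain ⟨w, hw⟩ := hsurjK pf h3'
    obtain ⟨t, ht⟩ := hAQ (-μ)
    refine ⟨(w, pb, pe, ph, t), ?_⟩
    have hγ : Qt *ᵥ t - pb - pe - B *ᵥ ph = pg := by
      rw [ht, Matrix.mulVec_neg]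
      have hneg : Aᵀ *ᵥ μ = -(pb + pe + pg + B *ᵥ ph) := by
        apply eq_neg_of_add_eq_zero_right
        exact hμ'
      rw [hneg]; abel
    rw [Smap_apply]
    show ((K *ᵥ w, pb, K *ᵥ w, Bᵀ *ᵥ (K *ᵥ w)),
      (pe, K *ᵥ w, Qt *ᵥ t - pb - pe - B *ᵥ ph, ph))
        = ((pf, pb, pf, Bᵀ *ᵥ pf), (pe, pf, pg, ph))
    rw [hw, hγ]

/-- Pointwise facts on the good neighborhood. -/
lemma key_facts {ℓ n ρ : ℕ} (A : Matrix (Fin ℓ) (Fin n) ℝ) (L : Matrix (Fin ρ) (Fin ℓ) ℝ)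
    (R : Matrix (Fin n) (Fin ρ) ℝ) (C : Matrix (Fin n) (Fin (n - ρ)) ℝ)
    (hrk : A.rank = ρ)
    (hdet : (L * A * R).det ≠ 0)
    (hdetK : ((((1 - R * (L * A * R)⁻¹ * (L * A)) * C))ᵀ *
      ((1 - R * (L * A * R)⁻¹ * (L * A)) * C)).det ≠ 0) :
    (∀ x, ((1 - R * (L * A * R)⁻¹ * (L * A)) * C) *ᵥ x = 0 → x = 0) ∧
    (∀ x, A *ᵥ (((1 - R * (L * A * R)⁻¹ * (L * A)) * C) *ᵥ x) = 0) ∧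
    (∀ v, A *ᵥ v = 0 → ∃ w, ((1 - R * (L * A * R)⁻¹ * (L * A)) * C) *ᵥ w = v) ∧
    (∀ t, ∃ μ, Aᵀ *ᵥ μ = (L * A)ᵀ *ᵥ t) ∧
    (∀ μ, ∃ t, (L * A)ᵀ *ᵥ t = Aᵀ *ᵥ μ) ∧
    (∀ t, (L * A)ᵀ *ᵥ t = 0 → t = 0) := by
  set X := L * A with hXdef
  set K := (1 - R * (X * R)⁻¹ * X) * C with hKdef
  have hs : Function.Surjective X.mulVecLin := surj_of_det hdet
  have hMM : (X * R) * (X * R)⁻¹ = 1 := Matrix.mul_nonsing_inv _ (isUnit_iff_ne_zero.mpr hdet)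
  have hXK : X * K = 0 := by
    rw [hKdef, ← Matrix.mul_assoc, Matrix.mul_sub, Matrix.mul_one]
    have h2 : X * (R * (X * R)⁻¹ * X) = X := by
      rw [← Matrix.mul_assoc X (R * (X * R)⁻¹) X, ← Matrix.mul_assoc X R ((X * R)⁻¹), hMM,
        Matrix.one_mul]
    rw [h2, sub_self, Matrix.zero_mul]
  have hKinj : ∀ x, K *ᵥ x = 0 → x = 0 := mulVec_inj_of_gram hdetK
  have hker_eq := ker_LA_eq hrk hs
  have hKker : ∀ x, A *ᵥ (K *ᵥ x) = 0 := by
    intro x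
    have hX0 : X *ᵥ (K *ᵥ x) = 0 := by rw [mulVec_mulVec, hXK, zero_mulVec]
    have hmem : K *ᵥ x ∈ LinearMap.ker X.mulVecLin := hX0
    rw [hker_eq] at hmem
    exact hmem
  have hrange_eq := range_K_eq hrk rfl hKker hKinj
  refine ⟨hKinj, hKker, ?_, ?_, ?_, transpose_mulVec_inj hs⟩
  · intro v hv
    have hmem : v ∈ LinearMap.ker A.mulVecLin := hv
    rw [← hrange_eq] at hmem
    obtain ⟨w, hw⟩ := hmem
    exact ⟨w, hw⟩
  · intro t
    refine ⟨Lᵀ *ᵥ t, ?_⟩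
    rw [mulVec_mulVec, ← transpose_mul]
  · intro μ
    have hmem : Aᵀ *ᵥ μ ∈ LinearMap.range Xᵀ.mulVecLin := by
      rw [range_LA_transpose_eq hrk hs]
      exact ⟨μ, rfl⟩
    obtain ⟨t, ht⟩ := hmem
    exact ⟨t, ht⟩

/-! ### Main theorem -/

/-- For continuous `A : U_pos → ℝ^{ℓ×n}` of constant rank and continuous
`B : U_pos → ℝ^{n×m}`, the family of sets of pairs of flows `(v_Lf, F_Lf, v_R, v_ext)` and
efforts `(F_Le, v_Le, F_R, F_ext)` with `v_Lf = v_Le = v_R`, `A(r) v_Le = 0`,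
`v_ext = B(r)ᵀ v_Le` and `F_Lf + F_Le + F_R + B(r) F_ext + A(r)ᵀ μ = 0` for some `μ`,
is a modulated Dirac structure. -/
theorem mechanical_isModulatedDirac {n m ℓ : ℕ}
    (Upos : Set (Fin n → ℝ)) (hUpos : IsOpen Upos)
    (A : (Fin n → ℝ) → Matrix (Fin ℓ) (Fin n) ℝ)
    (B : (Fin n → ℝ) → Matrix (Fin n) (Fin m) ℝ)
    (hA : ContinuousOn A Upos) (hB : ContinuousOn B Upos)
    (hrank : ∃ ρ : ℕ, ∀ r ∈ Upos, (A r).rank = ρ) :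
    IsModulatedDirac (Fin (3 * n + m) → ℝ) pairVnm Upos
      (fun r => {p : Vnm n m × Vnm n m |
        p.1.1 = p.2.2.1 ∧ p.1.2.2.1 = p.2.2.1 ∧
        A r *ᵥ p.2.2.1 = 0 ∧
        p.1.2.2.2 = (B r)ᵀ *ᵥ p.2.2.1 ∧
        ∃ μ : Fin ℓ → ℝ,
          p.1.2.1 + p.2.1 + p.2.2.2.1 + B r *ᵥ p.2.2.2.2 + (A r)ᵀ *ᵥ μ = 0}) := by
  obtain ⟨ρ, hρ⟩ := hrank
  constructor
  · intro r _hr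
    exact isDiracPair_Dset (A r) (B r)
  · intro r₀ hr₀
    have hA0 : (A r₀).rank = ρ := hρ r₀ hr₀
    have hρn : ρ ≤ n := by
      have := Matrix.rank_le_card_width (A r₀)
      simp only [Fintype.card_fin] at this
      omega
    obtain ⟨L, R, C, hLR, hAC, hCinj⟩ := exists_LRC (A r₀) hA0
    -- the relevant matrix families
    have hLA : ContinuousOn (fun r => L * A r) Upos :=
      ContinuousOn.matrix_mul' continuousOn_const hA
    have hMcont : ContinuousOn (fun r => L * A r * R) Upos :=
      hLA.matrix_mul' continuousOn_const
    set U1 : Set (Fin n → ℝ) := Upos ∩ (fun r => (L * A r * R).det) ⁻¹' {(0 : ℝ)}ᶜ with hU1def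
    have hU1open : IsOpen U1 :=
      hMcont.matrix_det'.isOpen_inter_preimage hUpos isOpen_compl_singleton
    have hU1sub : U1 ⊆ Upos := Set.inter_subset_left
    have hU1det : ∀ r ∈ U1, (L * A r * R).det ≠ 0 := fun r hr => hr.2
    have hMinv : ContinuousOn (fun r => (L * A r * R)⁻¹) U1 :=
      (hMcont.mono hU1sub).matrix_inv' hU1det
    have hKcont : ContinuousOn (fun r => (1 - R * (L * A r * R)⁻¹ * (L * A r)) * C) U1 :=
      (ContinuousOn.matrix_sub' continuousOn_const
        ((ContinuousOn.matrix_mul' continuousOn_const hMinv).matrix_mul'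
          (hLA.mono hU1sub))).matrix_mul' continuousOn_const
    have hgcont : ContinuousOn
        (fun r => (((1 - R * (L * A r * R)⁻¹ * (L * A r)) * C)ᵀ *
          ((1 - R * (L * A r * R)⁻¹ * (L * A r)) * C)).det) U1 :=
      (hKcont.matrix_transpose'.matrix_mul' hKcont).matrix_det'
    set Ux : Set (Fin n → ℝ) := U1 ∩ (fun r => (((1 - R * (L * A r * R)⁻¹ * (L * A r)) * C)ᵀ *
          ((1 - R * (L * A r * R)⁻¹ * (L * A r)) * C)).det) ⁻¹' {(0 : ℝ)}ᶜ with hUxdef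
    have hUxopen : IsOpen Ux := hgcont.isOpen_inter_preimage hU1open isOpen_compl_singleton
    have hUxsub : Ux ⊆ Upos := fun r hr => hU1sub hr.1
    -- r₀ is in Ux
    have hKr₀ : (1 - R * (L * A r₀ * R)⁻¹ * (L * A r₀)) * C = C := by
      rw [hLR, inv_one, Matrix.mul_one, Matrix.sub_mul, Matrix.one_mul,
        Matrix.mul_assoc R, Matrix.mul_assoc L, hAC, Matrix.mul_zero, Matrix.mul_zero,
        sub_zero]
    have hr₀U1 : r₀ ∈ U1 := by
      refine ⟨hr₀, ?_⟩
      simp only [Set.mem_preimage, Set.mem_compl_iff, Set.mem_singleton_iff, hLR, det_one]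
      exact one_ne_zero
    have hr₀Ux : r₀ ∈ Ux := by
      refine ⟨hr₀U1, ?_⟩
      simp only [Set.mem_preimage, Set.mem_compl_iff, Set.mem_singleton_iff, hKr₀]
      exact gram_det_ne_zero C hCinj
    -- the fixed linear equivalence
    have hfr : Module.finrank ℝ (Fin (3 * n + m) → ℝ) =
        Module.finrank ℝ (Pspace n m (n - ρ) ρ) := by
      simp [Module.finrank_prod, Module.finrank_pi]
      omega
    let e : (Fin (3 * n + m) → ℝ) ≃ₗ[ℝ] Pspace n m (n - ρ) ρ := LinearEquiv.ofFinrankEq _ _ hfr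
    refine ⟨Ux, hUxopen, hr₀Ux, hUxsub,
      fun r => (Smap ((1 - R * (L * A r * R)⁻¹ * (L * A r)) * C) ((L * A r)ᵀ) (B r)) ∘ₗ
        (e : (Fin (3 * n + m) → ℝ) →ₗ[ℝ] Pspace n m (n - ρ) ρ), ?_, ?_⟩
    · intro r hr
      have hdet : (L * A r * R).det ≠ 0 := hU1det r hr.1
      have hdetK : (((1 - R * (L * A r * R)⁻¹ * (L * A r)) * C)ᵀ *
          ((1 - R * (L * A r * R)⁻¹ * (L * A r)) * C)).det ≠ 0 := hr.2
      obtain ⟨hKinj, hKker, hsurjK, hQA, hAQ, hQinj⟩ :=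
        key_facts (A r) L R C (hρ r (hUxsub hr)) hdet hdetK
      constructor
      · rw [LinearMap.coe_comp]
        exact (smap_inj (B r) hKinj hQinj).comp (by
          rw [LinearEquiv.coe_coe]; exact e.injective)
      · rw [LinearMap.coe_comp, Set.range_comp, LinearEquiv.coe_coe,
          Set.range_eq_univ.mpr e.surjective, Set.image_univ]
        exact smap_range hKker hsurjK hQA hAQ
    · intro z
      simp only [LinearMap.coe_comp, LinearEquiv.coe_coe, Function.comp_apply, Smap_apply]
      have hKc : ContinuousOn (fun r => (1 - R * (L * A r * R)⁻¹ * (L * A r)) * C) Ux :=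
        hKcont.mono Set.inter_subset_left
      have hBc : ContinuousOn B Ux := hB.mono hUxsub
      have hLAc : ContinuousOn (fun r => L * A r) Ux := hLA.mono hUxsub
      have hv : ContinuousOn
          (fun r => ((1 - R * (L * A r * R)⁻¹ * (L * A r)) * C) *ᵥ (e z).1) Ux :=
        hKc.matrix_mulVec' continuousOn_const
      refine ContinuousOn.prodMk ?_ ?_
      · refine ContinuousOn.prodMk hv (ContinuousOn.prodMk continuousOn_const
          (ContinuousOn.prodMk hv ?_))
        exact (hBc.matrix_transpose').matrix_mulVec' hv
      · refine ContinuousOn.prodMk continuousOn_const (ContinuousOn.prodMk hv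
          (ContinuousOn.prodMk ?_ continuousOn_const))
        refine ContinuousOn.sub (ContinuousOn.sub (ContinuousOn.sub ?_ continuousOn_const)
          continuousOn_const) ?_
        · exact (hLAc.matrix_transpose').matrix_mulVec' continuousOn_const
        · exact hBc.matrix_mulVec' continuousOn_const
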